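/- arXiv:0802.4325 — 11 statements merged into one kernel-verified Lean document; each statement's English description precedes it below -/
import Mathlib

section
/- Let θ ∈ (0, π/4) and let t ≥ 1/(cos θ − sin θ). Let u, v, z be points in the Euclidean plane with angle(v, u, z) ≤ θ and |uz| ≤ |uv|. Then |uz| + t·|zv| ≤ t·|uv|. -/
set_option maxHeartbeats 1000000


open Real EuclideanGeometry

theorem stmt0 (θ t : ℝ) (hθ : θ ∈ Set.Ioo 0 (π/4))
    (ht : 1 / (Real.cos θ - Real.sin θ) ≤ t)
    (u v z : EuclideanSpace ℝ (Fin 2))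
    (hang : EuclideanGeometry.angle v u z ≤ θ)
    (hle : dist u z ≤ dist u v) :
    dist u z + t * dist z v ≤ t * dist u v := by
  obtain ⟨hθ0, hθ1⟩ := hθ
  have hpi : (0:ℝ) < π := Real.pi_pos
  have hsin : 0 < Real.sin θ := Real.sin_pos_of_pos_of_lt_pi hθ0 (by linarith)
  have hcos1 : Real.cos θ ≤ 1 := Real.cos_le_one θ
  have hk : Real.sin θ < Real.cos θ := by
    have : Real.sin θ < Real.sin (π/2 - θ) := by
      apply Real.sin_lt_sin_of_lt_of_le_pi_div_two (by linarith) (by linarith) (by linarith)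
    rwa [Real.sin_pi_div_two_sub] at this
  have hkpos : 0 < Real.cos θ - Real.sin θ := by linarith
  have htk : 1 ≤ t * (Real.cos θ - Real.sin θ) := by
    rwa [div_le_iff₀ hkpos] at ht
  have ht0 : 0 ≤ t := by nlinarith
  have hlaw := EuclideanGeometry.law_cos v u z
  have hangnn : 0 ≤ EuclideanGeometry.angle v u z := EuclideanGeometry.angle_nonneg v u z
  have hcosle : Real.cos θ ≤ Real.cos (EuclideanGeometry.angle v u z) :=
    Real.cos_le_cos_of_nonneg_of_le_pi hangnn (by linarith) hang
  have hpyth := Real.sin_sq_add_cos_sq θ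
  have ha0 : 0 ≤ dist u z := dist_nonneg
  have hc0 : 0 ≤ dist z v := dist_nonneg
  have hvz : dist v z = dist z v := dist_comm v z
  have hzu : dist z u = dist u z := dist_comm z u
  have hvu : dist v u = dist u v := dist_comm v u
  rw [hvz, hvu, hzu] at hlaw
  have hr0 : 0 ≤ dist u v - dist u z * (Real.cos θ - Real.sin θ) := by nlinarith
  have hab : 0 ≤ dist u z * dist u v := mul_nonneg ha0 dist_nonneg
  have h1 : dist u z * dist u v * Real.cos θ ≤ dist u z * dist u v * Real.cos (EuclideanGeometry.angle v u z) :=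
    mul_le_mul_of_nonneg_left hcosle hab
  have h2 : 0 ≤ Real.sin θ * dist u z * (dist u v - dist u z * Real.cos θ) := by
    apply mul_nonneg (mul_nonneg hsin.le ha0)
    nlinarith
  have h3 : (Real.sin θ ^ 2 + Real.cos θ ^ 2) * dist u z ^ 2 = dist u z ^ 2 := by
    rw [hpyth]; ring
  have hsq : dist z v ^ 2 ≤ (dist u v - dist u z * (Real.cos θ - Real.sin θ)) ^ 2 := by
    nlinarith [h1, h2, h3, hlaw]
  have key : dist z v ≤ dist u v - dist u z * (Real.cos θ - Real.sin θ) := by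
    nlinarith [sq_nonneg (dist z v + (dist u v - dist u z * (Real.cos θ - Real.sin θ)))]
  have h4 : t * dist z v ≤ t * (dist u v - dist u z * (Real.cos θ - Real.sin θ)) :=
    mul_le_mul_of_nonneg_left key ht0
  have h5 : dist u z * 1 ≤ dist u z * (t * (Real.cos θ - Real.sin θ)) :=
    mul_le_mul_of_nonneg_left htk ha0
  nlinarith [h4, h5]
end

section
/- Let θ ∈ (0, π/4) and let u, v, z be points in ℝ² with angle(v, u, z) ≤ θ and |uz| ≤ |uv|. Then |zv| < |uv|. -/
open Real EuclideanGeometry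

theorem stmt1 (θ : ℝ) (hθ : θ ∈ Set.Ioo 0 (π/4))
    (u v z : EuclideanSpace ℝ (Fin 2))
    (hang : EuclideanGeometry.angle v u z ≤ θ)
    (hle : dist u z ≤ dist u v) :
    dist z v < dist u v := by
  obtain ⟨hθ0, hθ4⟩ := hθ
  have hpi := Real.pi_gt_three
  have hzu : z ≠ u := by
    rintro rfl
    rw [EuclideanGeometry.angle_self_right] at hang
    linarith
  have hd1 : (0:ℝ) < dist z u := dist_pos.2 hzu
  have hd2 : (0:ℝ) < dist u v := lt_of_lt_of_le (by rwa [dist_comm]) hle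
  have hα0 : 0 ≤ EuclideanGeometry.angle z u v := EuclideanGeometry.angle_nonneg _ _ _
  have hαθ : EuclideanGeometry.angle z u v ≤ θ := by
    rwa [EuclideanGeometry.angle_comm]
  have hcos : (1:ℝ)/2 < Real.cos (EuclideanGeometry.angle z u v) := by
    have h1 : Real.cos (EuclideanGeometry.angle z u v) ≥ Real.cos θ := by
      apply Real.cos_le_cos_of_nonneg_of_le_pi hα0 (by linarith) hαθ
    have h2 : Real.cos θ > Real.cos (π/3) := by
      apply Real.cos_lt_cos_of_nonneg_of_le_pi (le_of_lt hθ0) (by linarith)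
      linarith
    rw [Real.cos_pi_div_three] at h2
    linarith
  have hlaw := EuclideanGeometry.law_cos z u v
  rw [dist_comm v u] at hlaw
  have hle' : dist z u ≤ dist u v := by rwa [dist_comm]
  have hkey : dist z v ^ 2 < dist u v ^ 2 := by
    nlinarith [mul_pos hd1 hd2]
  exact lt_of_pow_lt_pow_left₀ 2 dist_nonneg hkey
end

section
/- Let θ ∈ (0, π/4) and let u, v, u₁ be points in ℝ² with angle(u, v, u₁) ≤ θ (angle at apex v) and |u₁v| ≤ |uv|. Then |u₁u| < |uv|. -/
open Real EuclideanGeometry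

theorem stmt2 (θ : ℝ) (hθ : θ ∈ Set.Ioo 0 (π/4))
    (u v u₁ : EuclideanSpace ℝ (Fin 2))
    (hang : EuclideanGeometry.angle u v u₁ ≤ θ)
    (hle : dist u₁ v ≤ dist u v) :
    dist u₁ u < dist u v := by
  obtain ⟨hθ0, hθ4⟩ := hθ
  have hθπ : θ < π / 2 := hθ4.trans (by linarith [pi_pos])
  have hne1 : u₁ ≠ v := by
    rintro rfl
    rw [EuclideanGeometry.angle, vsub_self, InnerProductGeometry.angle_zero_right] at hang
    linarith
  have hne : u ≠ v := by
    rintro rfl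
    rw [EuclideanGeometry.angle, vsub_self, InnerProductGeometry.angle_zero_left] at hang
    linarith
  have h1 : (0:ℝ) < dist u₁ v := dist_pos.2 hne1
  have h2 : (0:ℝ) < dist u v := dist_pos.2 hne
  have hcos : Real.cos θ ≤ Real.cos (EuclideanGeometry.angle u v u₁) :=
    Real.cos_le_cos_of_nonneg_of_le_pi (EuclideanGeometry.angle_nonneg u v u₁)
      (by linarith [pi_pos]) hang
  have hcosθ : Real.cos (π/4) < Real.cos θ :=
    Real.cos_lt_cos_of_nonneg_of_le_pi hθ0.le (by linarith [pi_pos]) hθ4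
  have h4 : Real.cos (π/4) = Real.sqrt 2 / 2 := Real.cos_pi_div_four
  have hs : (1:ℝ)/2 < Real.sqrt 2 / 2 := by
    have : (1:ℝ) < Real.sqrt 2 := by
      rw [show (1:ℝ) = Real.sqrt 1 by simp]
      exact Real.sqrt_lt_sqrt (by norm_num) (by norm_num)
    linarith
  have hchalf : (1:ℝ)/2 < Real.cos (EuclideanGeometry.angle u v u₁) := by
    rw [h4] at hcosθ; linarith
  have hlaw := EuclideanGeometry.law_cos u v u₁
  have hsq : dist u₁ u * dist u₁ u < dist u v * dist u v := by
    rw [dist_comm u₁ u, dist_comm u₁ v] at *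
    nlinarith [hlaw, mul_pos h1 h2, mul_le_mul_of_nonneg_left hle h1.le,
      mul_pos (mul_pos h1 h2) (show (0:ℝ) < cos (EuclideanGeometry.angle u v u₁) - 1/2 by linarith)]
  nlinarith [dist_nonneg (x := u₁) (y := u), h2, hsq]
end

section
/- Let θ ∈ (0, π/2), and let u, v₁, u₁ be points in ℝ² with angle(u, v₁, u₁) ≤ θ (angle at apex v₁) and |u₁v₁| ≤ |uv₁|. Then |uu₁| ≤ |uv₁| − |u₁v₁|·cos θ + |u₁v₁|·sin θ. -/
open Real EuclideanGeometry

theorem stmt3 (θ : ℝ) (hθ : θ ∈ Set.Ioo 0 (π/2))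
    (u v₁ u₁ : EuclideanSpace ℝ (Fin 2))
    (hang : EuclideanGeometry.angle u v₁ u₁ ≤ θ)
    (hle : dist u₁ v₁ ≤ dist u v₁) :
    dist u u₁ ≤ dist u v₁ - dist u₁ v₁ * Real.cos θ + dist u₁ v₁ * Real.sin θ := by
  obtain ⟨hθ0, hθ2⟩ := hθ
  have hθpi : θ ≤ π := le_trans hθ2.le (by linarith [Real.pi_pos])
  have hcos : Real.cos θ ≤ Real.cos (EuclideanGeometry.angle u v₁ u₁) :=
    Real.cos_le_cos_of_nonneg_of_le_pi (EuclideanGeometry.angle_nonneg _ _ _) hθpi hang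
  have hlaw := EuclideanGeometry.law_cos u v₁ u₁
  have hcos1 : Real.cos θ ≤ 1 := Real.cos_le_one θ
  have hsin0 : 0 ≤ Real.sin θ := Real.sin_nonneg_of_nonneg_of_le_pi hθ0.le hθpi
  have hb0 : (0:ℝ) ≤ dist u₁ v₁ := dist_nonneg
  have ha0 : (0:ℝ) ≤ dist u v₁ := dist_nonneg
  have hd0 : (0:ℝ) ≤ dist u u₁ := dist_nonneg
  have hpyth : Real.sin θ ^ 2 + Real.cos θ ^ 2 = 1 := Real.sin_sq_add_cos_sq θ
  have hR0 : 0 ≤ dist u v₁ - dist u₁ v₁ * Real.cos θ + dist u₁ v₁ * Real.sin θ := by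
    nlinarith
  have hsq : dist u u₁ ^ 2 ≤
      (dist u v₁ - dist u₁ v₁ * Real.cos θ + dist u₁ v₁ * Real.sin θ) ^ 2 := by
    have h1 : (0:ℝ) ≤ dist u v₁ - dist u₁ v₁ * Real.cos θ := by nlinarith
    nlinarith [mul_nonneg (mul_nonneg hb0 hsin0) h1,
      mul_le_mul_of_nonneg_left hcos (mul_nonneg ha0 hb0)]
  nlinarith [hsq, hR0, hd0]
end

section
/- Let θ ∈ (0, π/2), and let u, v, v₁ be points in ℝ² with angle(v, u, v₁) ≤ θ (angle at apex u) and |uv₁| ≤ |uv|. Then |v₁v| ≤ |uv| − |uv₁|·cos θ + |uv₁|·sin θ. -/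
open Real EuclideanGeometry

theorem stmt4 (θ : ℝ) (hθ : θ ∈ Set.Ioo 0 (π/2))
    (u v v₁ : EuclideanSpace ℝ (Fin 2))
    (hang : EuclideanGeometry.angle v u v₁ ≤ θ)
    (hle : dist u v₁ ≤ dist u v) :
    dist v₁ v ≤ dist u v - dist u v₁ * Real.cos θ + dist u v₁ * Real.sin θ := by
  obtain ⟨hθ0, hθ2⟩ := hθ
  set α := EuclideanGeometry.angle v u v₁ with hα
  have hα0 : 0 ≤ α := EuclideanGeometry.angle_nonneg _ _ _
  have hlaw : dist v₁ v * dist v₁ v =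
      dist v₁ u * dist v₁ u + dist v u * dist v u - 2 * dist v₁ u * dist v u * Real.cos α := by
    rw [hα, EuclideanGeometry.angle_comm]
    exact EuclideanGeometry.law_cos v₁ u v
  have hcos : Real.cos θ ≤ Real.cos α := by
    apply Real.cos_le_cos_of_nonneg_of_le_pi hα0 (le_of_lt (lt_trans hθ2 (by linarith [Real.pi_pos])))
    exact hang
  have hsin : Real.sin α ≤ Real.sin θ := by
    have h1 : α ≤ π / 2 := le_of_lt (lt_of_le_of_lt hang hθ2)
    rcases le_or_gt α θ with h | h
    · exact Real.sin_le_sin_of_le_of_le_pi_div_two (by linarith [Real.pi_pos]) hθ2.le hang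
    · linarith [hang]
  have hsinθ : 0 ≤ Real.sin θ := Real.sin_nonneg_of_nonneg_of_le_pi hθ0.le
    (by linarith [Real.pi_pos])
  have hsinα : 0 ≤ Real.sin α := Real.sin_nonneg_of_nonneg_of_le_pi hα0
    (EuclideanGeometry.angle_le_pi _ _ _)
  have hcosα1 : Real.cos α ≤ 1 := Real.cos_le_one α
  have hd1 : (0:ℝ) ≤ dist u v₁ := dist_nonneg
  have hd2 : (0:ℝ) ≤ dist v₁ v := dist_nonneg
  have hdd : dist v₁ u = dist u v₁ := dist_comm _ _
  rw [hdd, dist_comm v u] at hlaw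
  have hbc : dist u v₁ * Real.cos α ≤ dist u v :=
    le_trans (by nlinarith) hle
  have hR : 0 ≤ dist u v - dist u v₁ * Real.cos α + dist u v₁ * Real.sin α := by
    nlinarith [mul_nonneg hd1 hsinα]
  have key : dist v₁ v ≤ dist u v - dist u v₁ * Real.cos α + dist u v₁ * Real.sin α := by
    have hsq : dist v₁ v ^ 2 ≤
        (dist u v - dist u v₁ * Real.cos α + dist u v₁ * Real.sin α) ^ 2 := by
      nlinarith [mul_nonneg (mul_nonneg hd1 hsinα) (sub_nonneg.2 hbc), Real.sin_sq_add_cos_sq α, sq_nonneg (dist u v₁)]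
    exact (pow_le_pow_iff_left₀ hd2 hR (by norm_num)).1 hsq
  have h1 : dist u v₁ * Real.cos θ ≤ dist u v₁ * Real.cos α := by nlinarith
  have h2 : dist u v₁ * Real.sin α ≤ dist u v₁ * Real.sin θ := by nlinarith
  linarith
end

section
/- Let θ ∈ (0, π/4), λ > 0, and t ≥ λ/((λ+1)(cos θ − sin θ) − 1), where (cos θ − sin θ) > 1/(λ+1). Let u, v, v₁, u₁ be points in ℝ² such that angle(v, u, v₁) ≤ θ, angle(u, v₁, u₁) ≤ θ, |uv₁| ≤ |uv| ≤ 1, |u₁v₁| ≤ |uv₁|, and |u₁v₁| ≥ λ. Then t·|uu₁| + |u₁v₁| + t·|v₁v| ≤ t·|uv|. -/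
open Real EuclideanGeometry

lemma keylem5 {θ : ℝ} (hθ0 : 0 ≤ θ) (hθ1 : θ ≤ π/4)
    (p q r : EuclideanSpace ℝ (Fin 2))
    (hang : EuclideanGeometry.angle p q r ≤ θ) (hle : dist r q ≤ dist p q) :
    dist p r ≤ dist p q - (Real.cos θ - Real.sin θ) * dist r q := by
  set α := EuclideanGeometry.angle p q r with hα
  have hα0 : 0 ≤ α := EuclideanGeometry.angle_nonneg _ _ _
  have hαπ : α ≤ π := EuclideanGeometry.angle_le_pi _ _ _
  have law := EuclideanGeometry.law_cos p q r
  have hsin : 0 ≤ Real.sin α := Real.sin_nonneg_of_nonneg_of_le_pi hα0 hαπ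
  have hcos1 : Real.cos α ≤ 1 := Real.cos_le_one α
  have hpyth := Real.sin_sq_add_cos_sq α
  have hB : 0 ≤ dist r q := dist_nonneg
  have hA : 0 ≤ dist p q := dist_nonneg
  have hPR : 0 ≤ dist p r := dist_nonneg
  have key : dist p r ≤ dist p q - dist r q * Real.cos α + dist r q * Real.sin α := by
    nlinarith [mul_nonneg hB hsin, mul_nonneg (mul_nonneg hB hsin) (sub_nonneg.2 hle),
      mul_nonneg hB (sub_nonneg.2 hcos1), sq_nonneg (Real.sin α),
      mul_nonneg (mul_nonneg hB hsin) (mul_nonneg hB (sub_nonneg.2 hcos1))]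
  have hθπ : θ ≤ π := le_trans hθ1 (by linarith [Real.pi_pos])
  have hcc : Real.cos θ ≤ Real.cos α :=
    Real.cos_le_cos_of_nonneg_of_le_pi hα0 hθπ hang
  have hss : Real.sin α ≤ Real.sin θ :=
    Real.sin_le_sin_of_le_of_le_pi_div_two (by linarith [Real.pi_pos]) (by linarith) hang
  nlinarith [mul_le_mul_of_nonneg_left hcc hB, mul_le_mul_of_nonneg_left hss hB]

theorem stmt5 (θ lam t : ℝ) (hθ : θ ∈ Set.Ioo 0 (π/4)) (hlam : 0 < lam)
    (hcs : Real.cos θ - Real.sin θ > 1 / (lam + 1))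
    (ht : lam / ((lam + 1) * (Real.cos θ - Real.sin θ) - 1) ≤ t)
    (u v v₁ u₁ : EuclideanSpace ℝ (Fin 2))
    (hang1 : EuclideanGeometry.angle v u v₁ ≤ θ)
    (hang2 : EuclideanGeometry.angle u v₁ u₁ ≤ θ)
    (h1 : dist u v₁ ≤ dist u v) (h2 : dist u v ≤ 1)
    (h3 : dist u₁ v₁ ≤ dist u v₁) (h4 : lam ≤ dist u₁ v₁) :
    t * dist u u₁ + dist u₁ v₁ + t * dist v₁ v ≤ t * dist u v := by
  obtain ⟨hθ0, hθ1⟩ := hθ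
  set c := Real.cos θ - Real.sin θ with hc
  -- bounds on c
  have hc1 : c ≤ 1 := by
    have h1' : Real.cos θ ≤ 1 := Real.cos_le_one θ
    have h2' : 0 ≤ Real.sin θ := Real.sin_nonneg_of_nonneg_of_le_pi (le_of_lt hθ0)
      (by linarith [Real.pi_pos])
    linarith
  have hlam1 : (0:ℝ) < lam + 1 := by linarith
  have hc0 : 0 < c := lt_trans (by positivity) hcs
  have hden : 0 < (lam + 1) * c - 1 := by
    have := (div_lt_iff₀ hlam1).mp hcs
    linarith
  have ht0 : 0 < t := lt_of_lt_of_le (by positivity) ht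
  have htlam : lam ≤ t * ((lam + 1) * c - 1) := by
    rw [div_le_iff₀ hden] at ht; linarith
  have htc : 1 ≤ t * c := by
    -- t ≥ λ/((λ+1)c−1) and λc ≥ (λ+1)c − 1 since c ≤ 1
    have h5 : lam * c ≥ (lam + 1) * c - 1 := by nlinarith
    nlinarith
  have k1 : dist v v₁ ≤ dist u v - c * dist u v₁ := by
    have := keylem5 (le_of_lt hθ0) (le_of_lt hθ1) v u v₁ hang1
      (by rwa [dist_comm v₁ u, dist_comm v u])
    rwa [dist_comm v u, dist_comm v₁ u] at this
  have k2 : dist u u₁ ≤ dist u v₁ - c * dist u₁ v₁ :=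
    by
    have := keylem5 (le_of_lt hθ0) (le_of_lt hθ1) u v₁ u₁ hang2 h3
    exact this
  have hvv : dist v₁ v = dist v v₁ := dist_comm _ _
  rw [hvv]
  have huv1 : dist u v₁ ≤ 1 := le_trans h1 h2
  nlinarith [mul_le_mul_of_nonneg_left k1 (le_of_lt ht0),
    mul_le_mul_of_nonneg_left k2 (le_of_lt ht0),
    mul_le_mul_of_nonneg_left h4 (sub_nonneg.2 htc),
    mul_le_mul_of_nonneg_left huv1 (mul_nonneg ht0.le (by linarith : (0:ℝ) ≤ 1 - c))]
end

section
/- Let θ ∈ (0, π/4), and let u, v, w be points in ℝ² with angle(w, v, u) ≤ θ (angle at apex v) and |wv| < |uv|/(2 cos θ). Then angle(w, u, v) < θ (angle at apex u). -/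
open Real EuclideanGeometry

/-- Vector form of the law of sines. -/
private lemma law_sin_aux {V : Type*} [NormedAddCommGroup V] [InnerProductSpace ℝ V]
    (x y : V) :
    Real.sin (InnerProductGeometry.angle x y) * (‖x‖ * ‖y‖) =
      Real.sin (InnerProductGeometry.angle (-x) (y - x)) * (‖x‖ * ‖y - x‖) := by
  have h1 := InnerProductGeometry.sin_angle_mul_norm_mul_norm x y
  have h2 := InnerProductGeometry.sin_angle_mul_norm_mul_norm (-x) (y - x)
  rw [norm_neg] at h2
  rw [h1, h2]
  congr 1
  simp only [inner_sub_left, inner_sub_right, inner_neg_left, inner_neg_right,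
    real_inner_comm y x]
  ring

/-- The key trigonometric inequality. -/
private lemma key_trig {θ α β : ℝ} (hθ0 : 0 < θ) (hθ4 : θ < π/4) (hα0 : 0 ≤ α)
    (hαθ : α ≤ θ) (hθβ : θ ≤ β) (hβπ : β ≤ π) (hab : α + β ≤ π) :
    Real.sin (α + β) ≤ 2 * Real.cos θ * Real.sin β := by
  have hpi := Real.pi_pos
  have hθπ2 : θ < π / 2 := by linarith
  have hc13 : Real.cos (π/3) < Real.cos θ := by
    apply Real.cos_lt_cos_of_nonneg_of_le_pi hθ0.le (by linarith) (by linarith)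
  rw [Real.cos_pi_div_three] at hc13
  have hsinβ : 0 ≤ Real.sin β := Real.sin_nonneg_of_nonneg_of_le_pi (by linarith) hβπ
  have hsinα : 0 ≤ Real.sin α := Real.sin_nonneg_of_nonneg_of_le_pi hα0 (by linarith)
  have hcosα : Real.cos α ≤ 1 := Real.cos_le_one α
  rcases le_or_gt (Real.cos β) 0 with hcβ | hcβ
  · rw [Real.sin_add]
    nlinarith [mul_nonneg hsinα (neg_nonneg.2 hcβ)]
  · have hβ2 : β < π / 2 := by
      by_contra h
      push_neg at h
      exact absurd (Real.cos_nonpos_of_pi_div_two_le_of_le h (by linarith)) (not_le.2 hcβ)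
    rcases le_or_gt (θ + β) (π/2) with h2 | h2
    · have hmono := Real.strictMonoOn_sin.monotoneOn
      have hle : Real.sin (α + β) ≤ Real.sin (θ + β) := by
        apply hmono (Set.mem_Icc.2 ⟨by linarith, by linarith⟩)
          (Set.mem_Icc.2 ⟨by linarith, by linarith⟩) (by linarith)
      have hsub : 0 ≤ Real.sin (β - θ) :=
        Real.sin_nonneg_of_nonneg_of_le_pi (by linarith) (by linarith)
      rw [Real.sin_sub] at hsub
      rw [Real.sin_add] at hle
      rw [Real.sin_add θ β] at hle
      rw [Real.sin_add]
      linarith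
    · have hge : Real.cos θ ≤ Real.sin β := by
        rw [← Real.sin_pi_div_two_sub]
        exact Real.strictMonoOn_sin.monotoneOn
          (Set.mem_Icc.2 ⟨by linarith, by linarith⟩)
          (Set.mem_Icc.2 ⟨by linarith, by linarith⟩) (by linarith)
      have hc2 : 0 ≤ Real.cos (2 * θ) :=
        Real.cos_nonneg_of_mem_Icc (Set.mem_Icc.2 ⟨by linarith, by linarith⟩)
      have h1 : Real.sin (α + β) ≤ 1 := Real.sin_le_one _
      nlinarith [Real.cos_two_mul θ]

theorem stmt7 (θ : ℝ) (hθ : θ ∈ Set.Ioo 0 (π/4))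
    (u v w : EuclideanSpace ℝ (Fin 2))
    (hang : EuclideanGeometry.angle w v u ≤ θ)
    (hlt : dist w v < dist u v / (2 * Real.cos θ)) :
    EuclideanGeometry.angle w u v < θ := by
  obtain ⟨hθ0, hθ4⟩ := hθ
  have hpi := Real.pi_pos
  have hc13 : Real.cos (π/3) < Real.cos θ := by
    apply Real.cos_lt_cos_of_nonneg_of_le_pi hθ0.le (by linarith) (by linarith)
  rw [Real.cos_pi_div_three] at hc13
  have hcθ : 0 < Real.cos θ := by linarith
  -- u ≠ v
  have huv : u ≠ v := by
    rintro rfl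
    rw [dist_self] at hlt
    simp only [zero_div] at hlt
    exact absurd hlt (not_lt.2 dist_nonneg)
  have hduv : 0 < dist u v := dist_pos.2 huv
  -- w ≠ u
  have hwu : w ≠ u := by
    rintro rfl
    rw [dist_comm w v, lt_div_iff₀ (by positivity : (0:ℝ) < 2 * Real.cos θ)] at hlt
    nlinarith [dist_nonneg (x := v) (y := w)]
  have hdwv_lt : dist w v < dist u v := by
    calc dist w v < dist u v / (2 * Real.cos θ) := hlt
    _ < dist u v := by
      rw [div_lt_iff₀ (by linarith)]
      nlinarith
  -- w ≠ v case is fine either way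
  by_cases hwv : w = v
  · subst hwv
    rw [EuclideanGeometry.angle_self_of_ne (Ne.symm huv)]
    exact hθ0
  -- main case
  by_contra hcon
  push_neg at hcon
  set α := EuclideanGeometry.angle w v u with hα
  set β := EuclideanGeometry.angle w u v with hβ
  set γ := EuclideanGeometry.angle u w v with hγ
  have hsum : α + β + γ = π := by
    have := EuclideanGeometry.angle_add_angle_add_angle_eq_pi (p₁ := w) (p₂ := v) (p₃ := u)
      (h := Ne.symm hwv)
    rw [EuclideanGeometry.angle_comm v u w] at this
    rw [hα, hβ, hγ]
    linarith [this]
  have hα0 : 0 ≤ α := EuclideanGeometry.angle_nonneg _ _ _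
  have hβπ : β ≤ π := EuclideanGeometry.angle_le_pi _ _ _
  have hγ0 : 0 ≤ γ := EuclideanGeometry.angle_nonneg _ _ _
  have hγπ : γ ≤ π := EuclideanGeometry.angle_le_pi _ _ _
  -- β ≠ π
  have hβne : β ≠ π := by
    intro hb
    have hsbtw : Sbtw ℝ w u v := EuclideanGeometry.angle_eq_pi_iff_sbtw.1 hb
    have := hsbtw.wbtw.dist_add_dist
    have hwu' : 0 < dist w u := dist_pos.2 hwu
    linarith
  have hβlt : β < π := lt_of_le_of_ne hβπ hβne
  have hsinβ : 0 < Real.sin β := Real.sin_pos_of_pos_of_lt_pi (by linarith) hβlt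
  -- law of sines: sin β * dist v u = sin γ * dist v w
  have hlaw : Real.sin β * dist v u = Real.sin γ * dist v w := by
    have hx : (0:ℝ) < ‖w - u‖ := by
      rw [norm_pos_iff, sub_ne_zero]; exact hwu
    have h := law_sin_aux (V := EuclideanSpace ℝ (Fin 2)) (w - u) (v - u)
    have hb' : β = InnerProductGeometry.angle (w - u) (v - u) := rfl
    have hg' : γ = InnerProductGeometry.angle (-(w - u)) ((v - u) - (w - u)) := by
      rw [hγ]
      show InnerProductGeometry.angle (u - w) (v - w) = _
      rw [show u - w = -(w - u) by abel, show v - w = (v - u) - (w - u) by abel]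
    rw [← hb', ← hg'] at h
    have hdvu : dist v u = ‖v - u‖ := by rw [dist_eq_norm]
    have hdvw : dist v w = ‖(v - u) - (w - u)‖ := by
      rw [dist_eq_norm]; congr 1; abel
    rw [hdvu, hdvw]
    refine mul_left_cancel₀ (ne_of_gt hx) ?_
    calc ‖w - u‖ * (Real.sin β * ‖v - u‖)
        = Real.sin β * (‖w - u‖ * ‖v - u‖) := by ring
      _ = Real.sin γ * (‖w - u‖ * ‖v - u - (w - u)‖) := h
      _ = ‖w - u‖ * (Real.sin γ * ‖v - u - (w - u)‖) := by ring
  -- sin γ = sin (α + β)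
  have hsinγ : Real.sin γ = Real.sin (α + β) := by
    have : γ = π - (α + β) := by linarith
    rw [this, Real.sin_pi_sub]
  have hkey : Real.sin (α + β) ≤ 2 * Real.cos θ * Real.sin β :=
    key_trig hθ0 hθ4 hα0 hang hcon hβπ (by linarith)
  -- derive contradiction
  have hchain : Real.sin β * dist v u < Real.sin β * dist u v := by
    calc Real.sin β * dist v u = Real.sin γ * dist v w := hlaw
      _ = Real.sin (α + β) * dist w v := by rw [hsinγ, dist_comm v w]
      _ ≤ 2 * Real.cos θ * Real.sin β * dist w v := by
          apply mul_le_mul_of_nonneg_right hkey dist_nonneg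
      _ < 2 * Real.cos θ * Real.sin β * (dist u v / (2 * Real.cos θ)) := by
          apply mul_lt_mul_of_pos_left hlt
          positivity
      _ = Real.sin β * dist u v := by
          field_simp
  rw [dist_comm v u] at hchain
  exact lt_irrefl _ hchain
end

section
/- Let θ ∈ (0, π/4), r > 1, λ = 1/(2r cos θ), and t ≥ (λ/cos 2θ)/((λ+1)(cos θ − sin θ) − 1), with (cos θ − sin θ) > 1/(λ+1). Let u, v, v₁, w be points in ℝ² such that angle(v, u, v₁) ≤ θ, angle(u, v₁, w) ≤ θ, |uv₁| ≤ |uv|, |w v₁| ≤ |u v₁|, and |w v₁| ≥ |u v₁|/(2 r cos θ). Then t·|uw| + |w v₁|/cos(2θ) + t·|v₁ v| ≤ t·|uv|. -/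
open Real EuclideanGeometry

lemma key_lemma (θ : ℝ) (hθ1 : 0 < θ) (hθ2 : θ < π/4)
    (p q r : EuclideanSpace ℝ (Fin 2))
    (hang : EuclideanGeometry.angle q p r ≤ θ)
    (hle : dist r p ≤ dist q p) :
    dist q r ≤ dist q p - (Real.cos θ - Real.sin θ) * dist r p := by
  have hpi : (0:ℝ) < π := Real.pi_pos
  have hθπ : θ ≤ π := by linarith
  have hang0 : 0 ≤ EuclideanGeometry.angle q p r := EuclideanGeometry.angle_nonneg q p r
  have hcos : Real.cos θ ≤ Real.cos (EuclideanGeometry.angle q p r) :=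
    Real.cos_le_cos_of_nonneg_of_le_pi hang0 hθπ hang
  have hc := EuclideanGeometry.law_cos q p r
  have hs0 : 0 ≤ Real.sin θ := Real.sin_nonneg_of_nonneg_of_le_pi hθ1.le hθπ
  have hsc : Real.sin θ < Real.cos θ := by
    rw [← Real.sin_pi_div_two_sub]
    apply Real.sin_lt_sin_of_lt_of_le_pi_div_two (by linarith) (by linarith) (by linarith)
  have hc1 : Real.cos θ ≤ 1 := Real.cos_le_one θ
  have hsq : Real.sin θ ^ 2 + Real.cos θ ^ 2 = 1 := Real.sin_sq_add_cos_sq θ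
  have hrp0 : (0:ℝ) ≤ dist r p := dist_nonneg
  have hqr0 : (0:ℝ) ≤ dist q r := dist_nonneg
  have hqp0 : (0:ℝ) ≤ dist q p := dist_nonneg
  have hrhs0 : 0 ≤ dist q p - (Real.cos θ - Real.sin θ) * dist r p := by nlinarith
  have h2 : dist q r ^ 2 ≤ (dist q p - (Real.cos θ - Real.sin θ) * dist r p) ^ 2 := by
    nlinarith [mul_nonneg (mul_nonneg hrp0 hrp0) hs0,
      mul_nonneg (mul_nonneg hrp0 (sub_nonneg.2 hle)) hs0,
      mul_nonneg (mul_nonneg hrp0 hrp0) (mul_nonneg hs0 (sub_nonneg.2 hc1)),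
      mul_nonneg (mul_nonneg hqp0 hrp0) (sub_nonneg.2 hcos)]
  nlinarith [h2, hrhs0, hqr0]

lemma main_ineq (c s c2 m t a β d uw vv : ℝ) (hc2 : 0 < c2) (hm : 0 < m)
    (hs0 : 0 ≤ s) (hc1 : c ≤ 1)
    (hcs : c - s > 1 / (1 / m + 1))
    (ht : 1 / m / c2 / ((1 / m + 1) * (c - s) - 1) ≤ t)
    (ha0 : 0 ≤ a) (hβ0 : 0 ≤ β) (h1 : a ≤ d) (h2 : β ≤ a) (h3 : a / m ≤ β)
    (huw : uw ≤ a - (c - s) * β) (hvv : vv ≤ d - (c - s) * a) :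
    t * uw + β / c2 + t * vv ≤ t * d := by
  have h1m : 0 < 1 / m + 1 := by positivity
  rw [gt_iff_lt, div_lt_iff₀ h1m] at hcs
  have hE : 0 < (1 + m) * (c - s) - m := by
    have hmm : (c - s) * (1 / m + 1) * m = (c - s) * (1 + m) := by
      field_simp
    nlinarith [mul_lt_mul_of_pos_right hcs hm]
  set E := (1 + m) * (c - s) - m with hEdef
  have hT : 1 ≤ t * c2 * E := by
    have heq : (1 / m / c2) / ((1 / m + 1) * (c - s) - 1) = 1 / (c2 * E) := by
      rw [hEdef]; field_simp
    rw [heq] at ht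
    have hce : 0 < c2 * E := mul_pos hc2 hE
    have := (div_le_iff₀ hce).1 ht
    linarith
  have ht0 : 0 < t := by nlinarith [mul_pos hc2 hE]
  have htc2 : 0 ≤ t * c2 := by positivity
  have h3' : a ≤ m * β := by
    have := (div_le_iff₀ hm).1 h3
    linarith
  have hcs1 : c - s ≤ 1 := by nlinarith
  have step1 : β * E ≤ (c - s) * (a + β) - a := by
    nlinarith [mul_nonneg (sub_nonneg.2 hcs1) (sub_nonneg.2 h3')]
  have step2 : β ≤ t * c2 * (β * E) := by
    nlinarith [mul_le_mul_of_nonneg_left hT hβ0]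
  have step4 : (c - s) * (a + β) - a ≤ d - uw - vv := by nlinarith
  have key2 : β ≤ (t * d - t * uw - t * vv) * c2 := by
    have h5 : t * c2 * (β * E) ≤ t * c2 * ((c - s) * (a + β) - a) :=
      mul_le_mul_of_nonneg_left step1 htc2
    have h6 : t * c2 * ((c - s) * (a + β) - a) ≤ t * c2 * (d - uw - vv) :=
      mul_le_mul_of_nonneg_left step4 htc2
    have : t * c2 * (d - uw - vv) = (t * d - t * uw - t * vv) * c2 := by ring
    linarith
  have := (div_le_iff₀ hc2).2 key2
  linarith

theorem stmt11 (θ r t : ℝ) (hθ : θ ∈ Set.Ioo 0 (π/4)) (hr : 1 < r)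
    (hcs : Real.cos θ - Real.sin θ > 1 / (1 / (2 * r * Real.cos θ) + 1))
    (ht : (1 / (2 * r * Real.cos θ) / Real.cos (2 * θ)) /
        ((1 / (2 * r * Real.cos θ) + 1) * (Real.cos θ - Real.sin θ) - 1) ≤ t)
    (u v v₁ w : EuclideanSpace ℝ (Fin 2))
    (hang1 : EuclideanGeometry.angle v u v₁ ≤ θ)
    (hang2 : EuclideanGeometry.angle u v₁ w ≤ θ)
    (h1 : dist u v₁ ≤ dist u v)
    (h2 : dist w v₁ ≤ dist u v₁)
    (h3 : dist u v₁ / (2 * r * Real.cos θ) ≤ dist w v₁) :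
    t * dist u w + dist w v₁ / Real.cos (2 * θ) + t * dist v₁ v ≤ t * dist u v := by
  obtain ⟨hθ1, hθ2⟩ := hθ
  have hpi : (0:ℝ) < π := Real.pi_pos
  have hc0 : 0 < Real.cos θ := Real.cos_pos_of_mem_Ioo ⟨by linarith, by linarith⟩
  have hc2 : 0 < Real.cos (2*θ) := Real.cos_pos_of_mem_Ioo ⟨by linarith, by linarith⟩
  have hs0 : 0 ≤ Real.sin θ := Real.sin_nonneg_of_nonneg_of_le_pi hθ1.le (by linarith)
  have hc1 : Real.cos θ ≤ 1 := Real.cos_le_one θ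
  have hm : 0 < 2 * r * Real.cos θ := by positivity
  have hvv : dist v₁ v ≤ dist u v - (Real.cos θ - Real.sin θ) * dist u v₁ := by
    have := key_lemma θ hθ1 hθ2 u v v₁ hang1 (by rw [dist_comm v₁ u, dist_comm v u]; exact h1)
    rwa [dist_comm v v₁, dist_comm v₁ u, dist_comm v u] at this
  have huw : dist u w ≤ dist u v₁ - (Real.cos θ - Real.sin θ) * dist w v₁ :=
    key_lemma θ hθ1 hθ2 v₁ u w hang2 h2
  exact main_ineq (Real.cos θ) (Real.sin θ) (Real.cos (2*θ)) (2 * r * Real.cos θ) t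
    (dist u v₁) (dist w v₁) (dist u v) (dist u w) (dist v₁ v)
    hc2 hm hs0 hc1 hcs ht dist_nonneg dist_nonneg h1 h2 h3 huw hvv
end

section
/- Let s ≥ 2 and consider the 2s points uᵢ = (i/(s−1), 1), vᵢ = (i/(s−1), 0), i = 0,…,s−1. The graph on these points consisting of the s vertical edges uᵢvᵢ has total edge length s, while there exists a spanning tree of the 2s points of total length at most 3. -/
open Real EuclideanGeometry

open SimpleGraph Finset in
lemma pathGraph_isAcyclic (n : ℕ) : (pathGraph n).IsAcyclic := by
  rw [isAcyclic_iff_forall_adj_isBridge]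
  intro v w hvw
  rw [pathGraph_adj] at hvw
  have key : ∀ (u v : Fin n), (u:ℕ) + 1 = (v:ℕ) →
      (pathGraph n).IsBridge s(u, v) := by
    intro u v huv
    rw [isBridge_iff]
    rintro ⟨p⟩
    have inv : ∀ a b : Fin n, (pathGraph n \ fromEdgeSet {s(u, v)}).Adj a b →
        ((a:ℕ) ≤ u ↔ (b:ℕ) ≤ u) := by
      intro a b hab
      rw [sdiff_adj, fromEdgeSet_adj] at hab
      obtain ⟨hadj, hne⟩ := hab
      rw [pathGraph_adj] at hadj
      have haneb : a ≠ b := by intro h; rw [h] at hadj; omega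
      have hne2 : s(a, b) ≠ s(u, v) := fun h => hne ⟨Set.mem_singleton_iff.mpr h, haneb⟩
      have hnat : ¬(((a:ℕ) = u ∧ (b:ℕ) = v) ∨ ((a:ℕ) = v ∧ (b:ℕ) = u)) := by
        intro h
        apply hne2
        rcases h with ⟨h1, h2⟩ | ⟨h1, h2⟩
        · rw [show a = u from Fin.ext h1, show b = v from Fin.ext h2]
        · rw [show a = v from Fin.ext h1, show b = u from Fin.ext h2, Sym2.eq_swap]
      omega
    have walk_inv : ∀ (x y : Fin n)
        (_ : (pathGraph n \ fromEdgeSet {s(u, v)}).Walk x y),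
        (x:ℕ) ≤ u → (y:ℕ) ≤ u := by
      intro x y q
      induction q with
      | nil => exact id
      | cons h q ih => exact fun hx => ih ((inv _ _ h).mp hx)
    have := walk_inv u v p le_rfl
    omega
  rcases hvw with h | h
  · exact key v w h
  · rw [Sym2.eq_swap]; exact key w v h

open SimpleGraph Finset in
lemma pathGraph_edgeFinset (n : ℕ) (inst : Fintype (pathGraph n).edgeSet) :
    @SimpleGraph.edgeFinset _ (pathGraph n) inst =
      Finset.image (fun k : Fin (n-1) =>
        s((⟨k, by omega⟩ : Fin n), (⟨(k:ℕ)+1, by omega⟩ : Fin n))) Finset.univ := by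
  ext e
  refine Sym2.ind (fun x y => ?_) e
  simp only [mem_edgeFinset, mem_edgeSet, pathGraph_adj, Finset.mem_image, Finset.mem_univ,
    true_and]
  constructor
  · rintro (h | h)
    · have hx : (x:ℕ) < n - 1 := by omega
      exact ⟨⟨x, hx⟩, by rw [Sym2.eq_iff]; exact Or.inl ⟨Fin.ext rfl, Fin.ext h⟩⟩
    · have hy : (y:ℕ) < n - 1 := by omega
      exact ⟨⟨y, hy⟩, by rw [Sym2.eq_iff]; exact Or.inr ⟨Fin.ext rfl, Fin.ext h⟩⟩
  · rintro ⟨k, hk⟩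
    rw [Sym2.eq_iff] at hk
    rcases hk with ⟨h1, h2⟩ | ⟨h1, h2⟩
    · exact Or.inl (by rw [← h1, ← h2])
    · exact Or.inr (by rw [← h1, ← h2])

open SimpleGraph Finset in
lemma isTree_map' {V W : Type*} (e : V ≃ W) {G : SimpleGraph V} (h : G.IsTree) :
    (G.map e.toEmbedding).IsTree := by
  constructor
  · exact (SimpleGraph.Iso.connected_iff (SimpleGraph.Iso.map e G)).mp h.isConnected
  · intro v w hw
    have hinj : Function.Injective (SimpleGraph.Iso.map e G).symm.toHom :=
      (SimpleGraph.Iso.map e G).symm.injective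
    exact h.IsAcyclic _ ((SimpleGraph.Walk.map_isCycle_iff_of_injective hinj).mpr hw)

open SimpleGraph Finset in
lemma edgeFinset_map' {V W : Type*} [Fintype V] [Fintype W] [DecidableEq V] [DecidableEq W]
    (e : V ≃ W) (G : SimpleGraph V) (instG : Fintype G.edgeSet)
    (instM : Fintype (G.map e.toEmbedding).edgeSet) :
    @SimpleGraph.edgeFinset _ (G.map e.toEmbedding) instM =
      (@SimpleGraph.edgeFinset _ G instG).image (Sym2.map e) := by
  ext z
  refine Sym2.ind (fun a b => ?_) z
  simp only [mem_edgeFinset, mem_edgeSet, SimpleGraph.map_adj, Finset.mem_image,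
    mem_edgeFinset]
  constructor
  · rintro ⟨u, v, huv, rfl, rfl⟩
    exact ⟨s(u, v), huv, by rw [Sym2.map_pair_eq]; rfl⟩
  · rintro ⟨z', hz', hmap⟩
    revert hz' hmap
    refine Sym2.ind (fun u v => ?_) z'
    intro huv hmap
    rw [Sym2.map_pair_eq, Sym2.eq_iff] at hmap
    rcases hmap with ⟨h1, h2⟩ | ⟨h1, h2⟩
    · exact ⟨u, v, huv, h1, h2⟩
    · exact ⟨v, u, huv.symm, h2, h1⟩

open SimpleGraph Finset in
lemma dist_pt (a b c d : ℝ) :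
    dist ((WithLp.equiv 2 (Fin 2 → ℝ)).symm ![a, b]) ((WithLp.equiv 2 (Fin 2 → ℝ)).symm ![c, d])
      = Real.sqrt ((a - c)^2 + (b - d)^2) := by
  rw [EuclideanSpace.dist_eq]
  simp [Fin.sum_univ_two, Real.dist_eq, sq_abs]


open SimpleGraph Finset in
def sqEquiv (N : ℕ) : Fin (N + N) ≃ Fin N ⊕ Fin N :=
  finSumFinEquiv.symm.trans (Equiv.sumCongr Fin.revPerm (Equiv.refl _))

open SimpleGraph Finset in
lemma sqEquiv_lt {N : ℕ} (j : ℕ) (hj : j < N + N) (hjN : j < N) :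
    sqEquiv N ⟨j, hj⟩ = Sum.inl ⟨N - 1 - j, by omega⟩ := by
  have h1 : (⟨j, hj⟩ : Fin (N + N)) = Fin.castAdd N ⟨j, hjN⟩ := rfl
  rw [sqEquiv, Equiv.trans_apply, h1, finSumFinEquiv_symm_apply_castAdd]
  simp only [Equiv.sumCongr_apply, Sum.map_inl, Fin.revPerm_apply]
  congr 1
  apply Fin.ext
  rw [Fin.val_rev]
  simp
  omega

open SimpleGraph Finset in
lemma sqEquiv_ge {N : ℕ} (j : ℕ) (hj : j < N + N) (hjN : N ≤ j) :
    sqEquiv N ⟨j, hj⟩ = Sum.inr ⟨j - N, by omega⟩ := by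
  have h1 : (⟨j, hj⟩ : Fin (N + N)) = Fin.natAdd N ⟨j - N, by omega⟩ := by
    apply Fin.ext; simp; omega
  rw [sqEquiv, Equiv.trans_apply, h1, finSumFinEquiv_symm_apply_natAdd]
  simp


/-- The `2s` points: `s` on the top side and `s` on the bottom side of a unit square. -/
noncomputable def squarePts (s : ℕ) : Fin s ⊕ Fin s → EuclideanSpace ℝ (Fin 2) :=
  Sum.elim
    (fun i => (WithLp.equiv 2 (Fin 2 → ℝ)).symm ![(i : ℝ) / ((s : ℝ) - 1), 1])
    (fun i => (WithLp.equiv 2 (Fin 2 → ℝ)).symm ![(i : ℝ) / ((s : ℝ) - 1), 0])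

open SimpleGraph Finset in
theorem stmt14 (s : ℕ) (hs : 2 ≤ s) :
    (∑ i : Fin s, dist (squarePts s (Sum.inl i)) (squarePts s (Sum.inr i))) = s ∧
    ∃ (T : SimpleGraph (Fin s ⊕ Fin s)) (_ : DecidableRel T.Adj),
      T.IsTree ∧
      ∑ e ∈ T.edgeFinset,
        Sym2.lift ⟨fun a b => dist (squarePts s a) (squarePts s b),
          fun _ _ => dist_comm _ _⟩ e ≤ 3 := by
  obtain ⟨m, rfl⟩ : ∃ m, s = m + 2 := ⟨s - 2, by omega⟩
  have hM : ((m + 2 : ℕ) : ℝ) - 1 = (m : ℝ) + 1 := by push_cast; ring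
  have hMpos : (0:ℝ) < (m : ℝ) + 1 := by positivity
  constructor
  · have hterm : ∀ i : Fin (m+2),
        dist (squarePts (m+2) (Sum.inl i)) (squarePts (m+2) (Sum.inr i)) = 1 := by
      intro i
      simp only [squarePts, Sum.elim_inl, Sum.elim_inr]
      rw [dist_pt]
      norm_num
    rw [Finset.sum_congr rfl (fun i _ => hterm i)]
    simp
  · -- the spanning tree
    set N := m + 2 with hN
    haveI : DecidableRel (pathGraph (N + N)).Adj :=
      fun a b => decidable_of_iff _ pathGraph_adj.symm
    refine ⟨(pathGraph (N + N)).map (sqEquiv N).toEmbedding, Classical.decRel _, ?_, ?_⟩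
    · refine isTree_map' (sqEquiv N) ⟨?_, pathGraph_isAcyclic _⟩
      have : Nonempty (Fin (N + N)) := ⟨⟨0, by omega⟩⟩
      exact ⟨pathGraph_preconnected _⟩
    · rw [edgeFinset_map' (sqEquiv N) (pathGraph (N + N)), pathGraph_edgeFinset,
        Finset.image_image]
      rw [Finset.sum_image ?hinj]
      case hinj =>
        intro x _ y _ hxy
        simp only [Function.comp_apply] at hxy
        have := Sym2.map.injective (sqEquiv N).injective hxy
        rw [Sym2.eq_iff] at this
        apply Fin.ext
        rcases this with ⟨h1, h2⟩ | ⟨h1, h2⟩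
        · simpa using congrArg Fin.val h1
        · have e1 := congrArg Fin.val h1
          have e2 := congrArg Fin.val h2
          simp at e1 e2
          omega
      -- evaluate each term
      have hval : ∀ k : Fin (N + N - 1),
          (Sym2.lift ⟨fun a b => dist (squarePts N a) (squarePts N b),
            fun _ _ => dist_comm _ _⟩)
            ((Sym2.map (sqEquiv N) ∘ fun k : Fin (N + N - 1) =>
              s((⟨(k:ℕ), by omega⟩ : Fin (N + N)), (⟨(k:ℕ)+1, by omega⟩ : Fin (N + N)))) k)
          = if (k:ℕ) = m + 1 then 1 else ((m:ℝ)+1)⁻¹ := by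
        intro k
        simp only [Function.comp_apply, Sym2.map_pair_eq, Sym2.lift_mk]
        have hk : (k:ℕ) < N + N - 1 := k.2
        rcases lt_trichotomy (k:ℕ) (m+1) with hlt | heq | hgt
        · -- top edge
          rw [sqEquiv_lt (k:ℕ) (by omega) (by omega), sqEquiv_lt ((k:ℕ)+1) (by omega) (by omega)]
          simp only [squarePts, Sum.elim_inl]
          rw [dist_pt, if_neg (by omega)]
          have h1 : N - 1 - (k:ℕ) = (N - 1 - ((k:ℕ)+1)) + 1 := by omega
          rw [h1, hM]
          push_cast
          have harith : ((↑(N - 1 - ((k:ℕ)+1)) : ℝ) + 1) / ((m:ℝ)+1) - (↑(N - 1 - ((k:ℕ)+1)) : ℝ) / ((m:ℝ)+1) = ((m:ℝ)+1)⁻¹ := by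
            field_simp
            ring
          rw [harith, show ((1:ℝ)-1)^2 = 0 by norm_num, add_zero]
          exact Real.sqrt_sq (by positivity)
        · -- crossing edge
          rw [sqEquiv_lt (k:ℕ) (by omega) (by omega), sqEquiv_ge ((k:ℕ)+1) (by omega) (by omega)]
          have h0 : N - 1 - (k:ℕ) = 0 := by omega
          have h0' : (k:ℕ) + 1 - N = 0 := by omega
          simp only [squarePts, Sum.elim_inl, Sum.elim_inr]
          rw [dist_pt, if_pos heq]
          simp only [h0, h0']
          norm_num
        · -- bottom edge
          rw [sqEquiv_ge (k:ℕ) (by omega) (by omega), sqEquiv_ge ((k:ℕ)+1) (by omega) (by omega)]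
          simp only [squarePts, Sum.elim_inr]
          rw [dist_pt, if_neg (by omega)]
          have h1 : (k:ℕ) + 1 - N = ((k:ℕ) - N) + 1 := by omega
          rw [h1, hM]
          push_cast
          have harith : ((↑((k:ℕ) - N) : ℝ) + 1) / ((m:ℝ)+1) - (↑((k:ℕ) - N) : ℝ) / ((m:ℝ)+1) = ((m:ℝ)+1)⁻¹ := by
            field_simp
            ring
          rw [show ((0:ℝ)-0)^2 = 0 by norm_num, add_zero, Real.sqrt_sq_eq_abs,
            abs_sub_comm, harith, abs_of_nonneg (by positivity)]
      rw [Finset.sum_congr rfl (fun k _ => hval k)]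
      -- sum the ifs
      have hc : m + 1 < N + N - 1 := by omega
      set c : Fin (N + N - 1) := ⟨m + 1, hc⟩ with hcdef
      have hterm2 : ∀ k : Fin (N + N - 1),
          (if (k:ℕ) = m + 1 then (1:ℝ) else ((m:ℝ)+1)⁻¹)
            = ((m:ℝ)+1)⁻¹ + (if k = c then 1 - ((m:ℝ)+1)⁻¹ else 0) := by
        intro k
        by_cases h : k = c
        · subst h
          rw [if_pos rfl, if_pos rfl]
          ring
        · rw [if_neg (fun hh => h (Fin.ext hh)), if_neg h, add_zero]
      rw [Finset.sum_congr rfl (fun k _ => hterm2 k), Finset.sum_add_distrib,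
        Finset.sum_const, Finset.sum_ite_eq' Finset.univ c, if_pos (Finset.mem_univ c),
        Finset.card_univ, Fintype.card_fin]
      rw [show N + N - 1 = 2*m+3 from by omega]
      rw [nsmul_eq_mul]
      push_cast
      have : (2*(m:ℝ)+3) * ((m:ℝ)+1)⁻¹ + (1 - ((m:ℝ)+1)⁻¹) = 3 := by
        field_simp
        ring
      linarith [this]
      infer_instance
end

section
/- Let θ ∈ (0, π/4) and let u, v, w₁ be points in ℝ² with w₁ and u in a common cone of half-angle θ at v (angle(w₁, v, u) ≤ θ) and |w₁v| ≥ |uv|/(2 cos θ) and |w₁v| ≤ |uv|. Then |u w₁| ≤ |uv| − |w₁v|(cos θ − sin θ). -/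
open Real EuclideanGeometry

theorem stmt16 (θ : ℝ) (hθ : θ ∈ Set.Ioo 0 (π/4))
    (u v w₁ : EuclideanSpace ℝ (Fin 2))
    (hang : EuclideanGeometry.angle w₁ v u ≤ θ)
    (h1 : dist u v / (2 * Real.cos θ) ≤ dist w₁ v)
    (h2 : dist w₁ v ≤ dist u v) :
    dist u w₁ ≤ dist u v - dist w₁ v * (Real.cos θ - Real.sin θ) := by
  obtain ⟨hθ0, hθ4⟩ := hθ
  have hc : 0 < Real.cos θ := Real.cos_pos_of_mem_Ioo
    ⟨by linarith [Real.pi_pos], by linarith [Real.pi_pos]⟩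
  have hs : 0 < Real.sin θ := Real.sin_pos_of_pos_of_lt_pi hθ0
    (by linarith [Real.pi_pos])
  have hc1 : Real.cos θ ≤ 1 := Real.cos_le_one θ
  have hsc : Real.sin θ ≤ Real.cos θ := by
    have := Real.cos_le_cos_of_nonneg_of_le_pi (le_of_lt hθ0)
      (by linarith [Real.pi_pos]) (le_of_lt hθ4)
    calc Real.sin θ ≤ Real.sin (π/4) :=
          Real.sin_le_sin_of_le_of_le_pi_div_two (by linarith [Real.pi_pos])
            (by linarith [Real.pi_pos]) hθ4.le
      _ = Real.cos (π/4) := by rw [Real.sin_pi_div_four, Real.cos_pi_div_four]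
      _ ≤ Real.cos θ := Real.cos_le_cos_of_nonneg_of_le_pi hθ0.le
          (by linarith [Real.pi_pos]) hθ4.le
  have hlc := EuclideanGeometry.law_cos u v w₁
  have hα : Real.cos θ ≤ Real.cos (∠ u v w₁) := by
    rw [EuclideanGeometry.angle_comm]
    exact Real.cos_le_cos_of_nonneg_of_le_pi (EuclideanGeometry.angle_nonneg _ _ _)
      (by linarith [Real.pi_pos]) hang
  have hd0 : 0 ≤ dist u w₁ := dist_nonneg
  have hw0 : 0 ≤ dist w₁ v := dist_nonneg
  have hpyth : Real.sin θ ^ 2 + Real.cos θ ^ 2 = 1 := Real.sin_sq_add_cos_sq θ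
  have hbc : dist w₁ v * Real.cos θ ≤ dist u v :=
    le_trans (by nlinarith) h2
  have hrhs : 0 ≤ dist u v - dist w₁ v * (Real.cos θ - Real.sin θ) := by nlinarith
  have hsq : dist u w₁ ^ 2 ≤ (dist u v - dist w₁ v * (Real.cos θ - Real.sin θ)) ^ 2 := by
    nlinarith [mul_le_mul_of_nonneg_left hα
        (mul_nonneg (dist_nonneg : (0:ℝ) ≤ dist u v) hw0),
      mul_nonneg (mul_nonneg hw0 hs.le) (sub_nonneg.2 hbc)]
  calc dist u w₁ = Real.sqrt (dist u w₁ ^ 2) := (Real.sqrt_sq hd0).symm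
    _ ≤ Real.sqrt ((dist u v - dist w₁ v * (Real.cos θ - Real.sin θ)) ^ 2) :=
        Real.sqrt_le_sqrt hsq
    _ = _ := Real.sqrt_sq hrhs
end

section
/- For any θ ∈ (0, π/4) and points u, v, w in ℝ² with u ≠ v, if angle(w, v, u) ≤ θ and |wv| < |uv|/(2 cos θ), then |uv| − |wv| cos(angle(w,v,u)) > 0 and tan(angle(w,u,v)) ≤ (|wv| sin θ)/(|uv| − |wv| cos θ). -/
open Real EuclideanGeometry

/-- Monotonicity of `r sin α / (c - r cos α)` in `α` under the quantitative hypothesis. -/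
lemma auxMono (θ α r c : ℝ) (hθ1 : 0 < θ) (hθ2 : θ < π/4) (hα0 : 0 ≤ α) (hαθ : α ≤ θ)
    (hr : 0 ≤ r) (hc : 0 < c) (hrc : r ≤ c * Real.cos θ) :
    r * Real.sin α / (c - r * Real.cos α) ≤ r * Real.sin θ / (c - r * Real.cos θ) := by
  have hθπ : θ < π / 2 := lt_trans hθ2 (by linarith [Real.pi_pos])
  have hcosθ1 : Real.cos θ < 1 := by
    have := Real.cos_lt_cos_of_nonneg_of_le_pi le_rfl (by linarith [Real.pi_pos]) hθ1
    simpa using this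
  have hrltc : r < c := lt_of_le_of_lt hrc (by nlinarith)
  have hcosα1 : Real.cos α ≤ 1 := Real.cos_le_one α
  have hcosθ1' : Real.cos θ ≤ 1 := Real.cos_le_one θ
  have hd1 : 0 < c - r * Real.cos α := by nlinarith
  have hd2 : 0 < c - r * Real.cos θ := by nlinarith
  rw [div_le_div_iff₀ hd1 hd2]
  have hs : Real.sin θ - Real.sin α = 2 * Real.sin ((θ - α)/2) * Real.cos ((θ + α)/2) :=
    Real.sin_sub_sin θ α
  have hs2 : Real.sin θ * Real.cos α - Real.cos θ * Real.sin α
      = 2 * Real.sin ((θ - α)/2) * Real.cos ((θ - α)/2) := by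
    have h1 : Real.sin (θ - α) = Real.sin θ * Real.cos α - Real.cos θ * Real.sin α :=
      Real.sin_sub θ α
    have h2 : Real.sin (2 * ((θ - α)/2)) = 2 * Real.sin ((θ - α)/2) * Real.cos ((θ - α)/2) :=
      Real.sin_two_mul _
    rw [show 2 * ((θ - α)/2) = θ - α by ring] at h2
    linarith
  have hsin_s : 0 ≤ Real.sin ((θ - α)/2) := by
    apply Real.sin_nonneg_of_nonneg_of_le_pi <;> nlinarith [Real.pi_pos]
  have hcos_s : Real.cos ((θ - α)/2) ≤ 1 := Real.cos_le_one _
  have hcos_m : Real.cos θ ≤ Real.cos ((θ + α)/2) :=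
    Real.cos_le_cos_of_nonneg_of_le_pi (by linarith) (by linarith [Real.pi_pos]) (by linarith)
  have hkey : r * Real.cos ((θ - α)/2) ≤ c * Real.cos ((θ + α)/2) := by
    nlinarith [mul_nonneg hr (Real.cos_nonneg_of_mem_Icc
      (⟨by linarith, by linarith⟩ : (θ - α)/2 ∈ Set.Icc (-(π/2)) (π/2)))]
  have e1 : Real.sin θ * (c - r * Real.cos α) - Real.sin α * (c - r * Real.cos θ)
      = 2 * Real.sin ((θ - α)/2) * (c * Real.cos ((θ + α)/2) - r * Real.cos ((θ - α)/2)) := by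
    linear_combination c * hs - r * hs2
  have key2 : Real.sin α * (c - r * Real.cos θ) ≤ Real.sin θ * (c - r * Real.cos α) := by
    nlinarith [mul_nonneg hsin_s (sub_nonneg.2 hkey)]
  nlinarith [mul_le_mul_of_nonneg_left key2 hr]

theorem stmt18 (θ : ℝ) (hθ : θ ∈ Set.Ioo 0 (π/4))
    (u v w : EuclideanSpace ℝ (Fin 2)) (huv : u ≠ v)
    (hang : EuclideanGeometry.angle w v u ≤ θ)
    (hlt : dist w v < dist u v / (2 * Real.cos θ)) :
    0 < dist u v - dist w v * Real.cos (EuclideanGeometry.angle w v u) ∧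
    Real.tan (EuclideanGeometry.angle w u v) ≤
      dist w v * Real.sin θ / (dist u v - dist w v * Real.cos θ) := by
  obtain ⟨hθ0, hθ4⟩ := hθ
  have hπ := Real.pi_pos
  have hθπ2 : θ < π / 2 := by linarith
  have hcosθpos : 0 < Real.cos θ := Real.cos_pos_of_mem_Ioo ⟨by linarith, hθπ2⟩
  have hcosθ_ge : Real.sqrt 2 / 2 ≤ Real.cos θ := by
    have := Real.cos_le_cos_of_nonneg_of_le_pi (le_of_lt hθ0) (by linarith) (le_of_lt hθ4)
    rwa [Real.cos_pi_div_four] at this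
  have hsqrt2 : (1:ℝ) < Real.sqrt 2 := by
    have : (1:ℝ) = Real.sqrt 1 := (Real.sqrt_one).symm
    rw [this]; exact Real.sqrt_lt_sqrt (by norm_num) (by norm_num)
  have h2cos2 : 1 ≤ 2 * Real.cos θ ^ 2 := by
    nlinarith [Real.sq_sqrt (by norm_num : (2:ℝ) ≥ 0)]
  set c := dist u v with hc_def
  set r := dist w v with hr_def
  have hc : 0 < c := dist_pos.2 huv
  have hr : 0 ≤ r := dist_nonneg
  have hrcθ : r ≤ c * Real.cos θ := by
    have h1 : r < c / (2 * Real.cos θ) := hlt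
    rw [lt_div_iff₀ (by positivity)] at h1
    nlinarith [mul_pos hcosθpos hcosθpos]
  have hcosθ1 : Real.cos θ ≤ 1 := Real.cos_le_one θ
  have hcosθlt1 : Real.cos θ < 1 := by
    have := Real.cos_lt_cos_of_nonneg_of_le_pi le_rfl (by linarith) hθ0
    simpa using this
  have hrltc : r < c := by nlinarith
  set α := EuclideanGeometry.angle w v u with hα_def
  have hcosα1 : Real.cos α ≤ 1 := Real.cos_le_one α
  have hα0 : 0 ≤ α := EuclideanGeometry.angle_nonneg w v u
  have part1 : 0 < c - r * Real.cos α := by nlinarith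
  refine ⟨part1, ?_⟩
  -- vectors
  set x : EuclideanSpace ℝ (Fin 2) := w - u with hx_def
  set y : EuclideanSpace ℝ (Fin 2) := v - u with hy_def
  set z : EuclideanSpace ℝ (Fin 2) := w - v with hz_def
  have hzxy : z = x - y := by rw [hx_def, hy_def, hz_def]; abel
  have hny : ‖y‖ = c := by rw [hy_def, hc_def, dist_comm, dist_eq_norm]
  have hnz : ‖z‖ = r := by rw [hz_def, hr_def, dist_eq_norm]
  set t : ℝ := inner ℝ x y with ht_def
  -- angle at u
  have hβ : EuclideanGeometry.angle w u v = InnerProductGeometry.angle x y := by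
    rw [EuclideanGeometry.angle, hx_def, hy_def]; norm_num [vsub_eq_sub]
  -- angle at v
  have hαv : α = InnerProductGeometry.angle z (-y) := by
    rw [hα_def, EuclideanGeometry.angle, hz_def, hy_def, vsub_eq_sub, vsub_eq_sub]
    congr 1
    abel
  have hinner_zy : (inner ℝ z (-y) : ℝ) = c ^ 2 - t := by
    rw [hzxy, inner_neg_right, inner_sub_left, ht_def]
    have : (inner ℝ y y : ℝ) = ‖y‖ ^ 2 := real_inner_self_eq_norm_sq y
    rw [this, hny]; ring
  have hcosα : Real.cos α * (r * c) = c ^ 2 - t := by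
    have := InnerProductGeometry.cos_angle_mul_norm_mul_norm z (-y)
    rw [norm_neg, hnz, hny, hinner_zy] at this
    rw [hαv]; exact this
  have ht_pos : 0 < t := by nlinarith
  -- w ≠ u
  have hnx_pos : 0 < ‖x‖ := by
    rcases eq_or_ne x 0 with h | h
    · exfalso
      rw [ht_def, h, inner_zero_left] at ht_pos; exact lt_irrefl 0 ht_pos
    · exact norm_pos_iff.2 h
  -- r² relation
  have hr2 : r ^ 2 = ‖x‖ ^ 2 - 2 * t + c ^ 2 := by
    rw [← hnz, hzxy, norm_sub_sq_real, hny, ht_def]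
  -- sin of α
  have hsinα : Real.sin α * (r * c) = Real.sqrt (‖x‖ ^ 2 * c ^ 2 - t ^ 2) := by
    have h := InnerProductGeometry.sin_angle_mul_norm_mul_norm z (-y)
    rw [norm_neg, hnz, hny, hinner_zy] at h
    rw [hαv, h]
    congr 1
    have h1 : (inner ℝ z z : ℝ) = r ^ 2 := by
      rw [real_inner_self_eq_norm_sq, hnz]
    have h2 : (inner ℝ (-y) (-y) : ℝ) = c ^ 2 := by
      rw [inner_neg_neg, real_inner_self_eq_norm_sq, hny]
    rw [h1, h2, hr2]; ring
  -- sin and cos of β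
  have hcosβ : Real.cos (InnerProductGeometry.angle x y) = t / (‖x‖ * c) := by
    rw [InnerProductGeometry.cos_angle, hny, ht_def]
  have hsinβ : Real.sin (InnerProductGeometry.angle x y) * (‖x‖ * c) =
      Real.sqrt (‖x‖ ^ 2 * c ^ 2 - t ^ 2) := by
    have h := InnerProductGeometry.sin_angle_mul_norm_mul_norm x y
    rw [hny] at h
    rw [h]
    congr 1
    have h1 : (inner ℝ x x : ℝ) = ‖x‖ ^ 2 := real_inner_self_eq_norm_sq x
    have h2 : (inner ℝ y y : ℝ) = c ^ 2 := by rw [real_inner_self_eq_norm_sq, hny]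
    rw [h1, h2, ← ht_def]; ring
  -- tan β
  have htan : Real.tan (EuclideanGeometry.angle w u v) =
      Real.sqrt (‖x‖ ^ 2 * c ^ 2 - t ^ 2) / t := by
    rw [hβ, Real.tan_eq_sin_div_cos, hcosβ, div_div_eq_mul_div, hsinβ]
  have hd : c - r * Real.cos α = t / c := by
    rw [eq_div_iff hc.ne']
    linear_combination -hcosα
  have hn : r * Real.sin α = Real.sqrt (‖x‖ ^ 2 * c ^ 2 - t ^ 2) / c := by
    rw [eq_div_iff hc.ne', ← hsinα]
    ring
  have heq : Real.tan (EuclideanGeometry.angle w u v)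
      = r * Real.sin α / (c - r * Real.cos α) := by
    rw [htan, hn, hd, div_div_div_cancel_right₀ hc.ne']
  rw [heq]
  exact auxMono θ α r c hθ0 hθ4 hα0 hang hr hc hrcθ
end
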